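/- Let φ : ℝ → ℝ be a measurable odd function with 0 ≤ φ(x) ≤ 1 for x > 0, φ(x) = 1 for 0 < x ≤ 1, and φ(x) = 0 for x ≥ 2, and let G_φ(z) = (1/(πi))∫_ℝ φ(t)/(z − t) dt for z ∈ ℍ. Let c > 0 and let (x_n), (y_n) be real sequences with y_n > 0, y_n → 0, and |x_n| ≤ c·√(y_n) for all n. Then liminf_{n→∞} |G_φ(x_n + i·y_n)| / log(1/y_n) ≥ 1/π. -/

import Mathlib

open MeasureTheory Real Complex Filter
open scoped Topology

noncomputable section

/-- `G_ψ(z) = (1/(πi)) ∫_ℝ ψ(t)/(z - t) dt`, the analytic extension `ψ + iHψ`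
of an integrable `ψ : ℝ → ℝ` to the upper half-plane. -/
noncomputable def UHG (ψ : ℝ → ℝ) (z : ℂ) : ℂ :=
  ((Real.pi : ℂ) * Complex.I)⁻¹ • ∫ t : ℝ, ((ψ t : ℂ) / (z - (t : ℂ)))

/-- The hypotheses on the bump function `φ`: measurable, odd, `0 ≤ φ ≤ 1` on `(0,∞)`,
`φ = 1` on `(0,1]` and `φ = 0` on `[2,∞)`. -/
def IsPhi (φ : ℝ → ℝ) : Prop :=
  Measurable φ ∧ (∀ x : ℝ, φ (-x) = - φ x) ∧ (∀ x : ℝ, 0 < x → 0 ≤ φ x ∧ φ x ≤ 1) ∧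
    (∀ x : ℝ, 0 < x → x ≤ 1 → φ x = 1) ∧ (∀ x : ℝ, 2 ≤ x → φ x = 0)

namespace Stmt12Aux

lemma phi_zero {φ : ℝ → ℝ} (hφ : IsPhi φ) : φ 0 = 0 := by
  have := hφ.2.1 0
  simp at this
  linarith

lemma phi_abs_le {φ : ℝ → ℝ} (hφ : IsPhi φ) (t : ℝ) : |φ t| ≤ 1 := by
  obtain ⟨-, hodd, hbd, -, -⟩ := hφ
  rcases lt_trichotomy t 0 with h | h | h
  · have h1 := hbd (-t) (by linarith)
    have h2 : φ t = - φ (-t) := by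
      have := hodd (-t); rw [neg_neg] at this; linarith
    rw [h2, abs_neg, abs_le]
    exact ⟨by linarith [h1.2], by linarith [h1.1]⟩
  · subst h
    have h0 := hodd 0
    rw [neg_zero] at h0
    have : φ 0 = 0 := by linarith
    simp [this]
  · have h1 := hbd t h
    rw [abs_le]; exact ⟨by linarith [h1.1], h1.2⟩

lemma phi_supp {φ : ℝ → ℝ} (hφ : IsPhi φ) (t : ℝ) (ht : 2 ≤ |t|) : φ t = 0 := by
  obtain ⟨-, hodd, -, -, hz⟩ := hφ
  rcases le_abs.mp ht with h | h
  · exact hz t h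
  · have := hodd (-t); rw [neg_neg] at this
    have h2 := hz (-t) h
    linarith

end Stmt12Aux

namespace Stmt12Aux

lemma key (φ : ℝ → ℝ) (hφ : IsPhi φ) (a b M : ℝ) (hb : 0 < b) (hb1 : b ≤ 1)
    (hM : 1 ≤ M) (ha : |a| ≤ 1/2) (hab : a^2 + b^2 ≤ M * b) :
    Real.log (1/b) - (Real.log M + 10) ≤
      ‖∫ t : ℝ, ((φ t : ℂ) / ((a : ℂ) + (b : ℂ) * Complex.I - (t : ℂ)))‖ := by
  set z : ℂ := (a : ℂ) + (b : ℂ) * Complex.I with hz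
  set k : ℝ → ℝ := fun t => (a - t) / ((a - t)^2 + b^2) with hk
  set g : ℝ → ℝ := fun t => φ t * k t with hg
  set F : ℝ → ℝ := fun t => -(1/2) * Real.log ((a - t)^2 + b^2) with hF
  have hDpos : ∀ t : ℝ, 0 < (a - t)^2 + b^2 := fun t => by positivity
  have hzre : ∀ t : ℝ, (z - (t : ℂ)).re = a - t := fun t => by simp [hz]
  have hzim : ∀ t : ℝ, (z - (t : ℂ)).im = b := fun t => by simp [hz]
  -- norm bound on the complex integrand
  have hnorm_ge : ∀ t : ℝ, b ≤ ‖z - (t : ℂ)‖ := by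
    intro t
    have h1 := Complex.abs_im_le_norm (z - (t : ℂ))
    rw [hzim t] at h1
    calc b ≤ |b| := le_abs_self b
    _ ≤ _ := h1
  have hbound : ∀ t : ℝ, ‖(φ t : ℂ) / (z - (t : ℂ))‖ ≤
      Set.indicator (Set.Icc (-2 : ℝ) 2) (fun _ => b⁻¹) t := by
    intro t
    by_cases ht : t ∈ Set.Icc (-2 : ℝ) 2
    · rw [Set.indicator_of_mem ht, norm_div]
      have h1 : ‖(φ t : ℂ)‖ ≤ 1 := by
        rw [Complex.norm_real, Real.norm_eq_abs]; exact phi_abs_le hφ t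
      calc ‖(φ t : ℂ)‖ / ‖z - (t : ℂ)‖ ≤ 1 / b :=
            div_le_div₀ zero_le_one h1 hb (hnorm_ge t)
      _ = b⁻¹ := one_div b
    · have h2 : 2 ≤ |t| := by
        simp only [Set.mem_Icc, not_and_or, not_le] at ht
        rw [le_abs]
        rcases ht with h | h
        · right; linarith
        · left; linarith
      rw [phi_supp hφ t h2, Set.indicator_of_notMem ht]
      simp
  have hind : Integrable (Set.indicator (Set.Icc (-2 : ℝ) 2) (fun _ => b⁻¹)) :=
    (integrable_indicator_iff measurableSet_Icc).mpr
      (integrableOn_const measure_Icc_lt_top.ne)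
  have hmeasC : Measurable fun t : ℝ => (φ t : ℂ) / (z - (t : ℂ)) :=
    (Complex.measurable_ofReal.comp hφ.1).div
      (measurable_const.sub Complex.measurable_ofReal)
  have hInt : Integrable (fun t : ℝ => (φ t : ℂ) / (z - (t : ℂ))) :=
    Integrable.mono' hind hmeasC.aestronglyMeasurable (ae_of_all _ hbound)
  -- real part computation
  have hre_pt : ∀ t : ℝ, ((φ t : ℂ) / (z - (t : ℂ))).re = g t := by
    intro t
    rw [Complex.div_re, Complex.normSq_apply, hzre t, hzim t]
    simp only [Complex.ofReal_re, Complex.ofReal_im, hg, hk]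
    ring
  have hre : (∫ t : ℝ, (φ t : ℂ) / (z - (t : ℂ))).re = ∫ t : ℝ, g t := by
    have h := integral_re hInt
    simp only [RCLike.re_to_complex] at h
    rw [← h]
    exact integral_congr_ae (ae_of_all _ fun t => (hre_pt t))
  -- integrability of g
  have hk_cont : Continuous k := by
    apply Continuous.div
    · fun_prop
    · fun_prop
    · exact fun t => ne_of_gt (hDpos t)
  have hg_meas : Measurable g := hφ.1.mul hk_cont.measurable
  have hg_bound : ∀ t : ℝ, ‖g t‖ ≤ Set.indicator (Set.Icc (-2 : ℝ) 2) (fun _ => b⁻¹) t := by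
    intro t
    have := hbound t
    rw [norm_div] at this
    calc ‖g t‖ = |((φ t : ℂ) / (z - (t : ℂ))).re| := by rw [hre_pt t, Real.norm_eq_abs]
    _ ≤ ‖(φ t : ℂ) / (z - (t : ℂ))‖ := by
        exact Complex.abs_re_le_norm _
    _ ≤ _ := hbound t
  have hg_int : Integrable g :=
    Integrable.mono' hind hg_meas.aestronglyMeasurable (ae_of_all _ hg_bound)
  -- FTC: antiderivative of k
  have hFd : ∀ t : ℝ, HasDerivAt F (k t) t := by
    intro t
    have h1 : HasDerivAt (fun s : ℝ => a - s) (-1) t := (hasDerivAt_id t).const_sub a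
    have h2 : HasDerivAt (fun s : ℝ => (a - s)^2 + b^2)
        (((2 : ℕ) * (a - t) ^ (2 - 1)) * (-1)) t := (h1.pow 2).add_const _
    have h3 := (Real.hasDerivAt_log (ne_of_gt (hDpos t))).comp t h2
    have h4 := h3.const_mul (-(1/2) : ℝ)
    refine h4.congr_deriv ?_
    show _ = (a - t) / ((a - t)^2 + b^2)
    field_simp
    ring
  have hki : ∀ u v : ℝ, ∫ s in u..v, k s = F v - F u := fun u v =>
    intervalIntegral.integral_eq_sub_of_hasDerivAt (fun t _ => hFd t)
      (hk_cont.intervalIntegrable u v)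
  -- splitting the integral of g
  have h0ae : ∀ᵐ t : ℝ, t ≠ (0 : ℝ) := by
    rw [ae_iff]
    simp only [ne_eq, not_not, Set.setOf_eq_eq_singleton]
    exact measure_singleton 0
  have hI1 : ∫ t in Set.Ioc (0 : ℝ) 1, g t = F 1 - F 0 := by
    have he : Set.EqOn g k (Set.Ioc (0:ℝ) 1) := fun t ht => by
      simp only [hg, hφ.2.2.2.1 t ht.1 ht.2, one_mul]
    rw [setIntegral_congr_fun measurableSet_Ioc he,
      ← intervalIntegral.integral_of_le zero_le_one, hki 0 1]
  have hI2 : ∫ t in Set.Ioc (-1 : ℝ) 0, g t = -(F 0 - F (-1)) := by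
    have hcg : ∀ᵐ t : ℝ, t ∈ Set.Ioc (-1 : ℝ) 0 → g t = -k t := by
      filter_upwards [h0ae] with t ht0 htm
      have htneg : t < 0 := lt_of_le_of_ne htm.2 ht0
      have h5 : φ (-t) = 1 := hφ.2.2.2.1 (-t) (by linarith) (by linarith [htm.1])
      have h6 : φ t = -1 := by
        have := hφ.2.1 (-t); rw [neg_neg] at this; rw [this, h5]
      simp only [hg, h6]; ring
    rw [setIntegral_congr_ae measurableSet_Ioc hcg, integral_neg,
      ← intervalIntegral.integral_of_le (by norm_num : (-1 : ℝ) ≤ 0), hki (-1) 0]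
  have hsplit : ∫ t : ℝ, g t = (∫ t in Set.Ioc (-1 : ℝ) 0, g t) +
      (∫ t in Set.Ioc (0 : ℝ) 1, g t) + ∫ t in (Set.Ioc (-1 : ℝ) 1)ᶜ, g t := by
    have h1 := integral_add_compl (measurableSet_Ioc : MeasurableSet (Set.Ioc (-1 : ℝ) 1))
      hg_int
    have h2 : ∫ t in Set.Ioc (-1 : ℝ) 1, g t =
        (∫ t in Set.Ioc (-1 : ℝ) 0, g t) + ∫ t in Set.Ioc (0 : ℝ) 1, g t := by
      rw [← Set.Ioc_union_Ioc_eq_Ioc (by norm_num : (-1:ℝ) ≤ 0) (by norm_num : (0:ℝ) ≤ 1),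
        setIntegral_union (Set.Ioc_disjoint_Ioc_of_le le_rfl) measurableSet_Ioc
          hg_int.integrableOn hg_int.integrableOn]
    rw [← h1, h2]
  -- bound the remainder
  have hRem : ∫ t in (Set.Ioc (-1 : ℝ) 1)ᶜ, g t ≤ 8 := by
    set h : ℝ → ℝ := Set.indicator (Set.Icc (-2 : ℝ) 2) (fun _ => (2 : ℝ)) with hh
    have hh_int : Integrable h :=
      (integrable_indicator_iff measurableSet_Icc).mpr
        (integrableOn_const measure_Icc_lt_top.ne)
    have hgle : ∀ t ∈ (Set.Ioc (-1 : ℝ) 1)ᶜ, g t ≤ h t := by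
      intro t ht
      have htS : t ≤ -1 ∨ 1 < t := by
        simp only [Set.mem_compl_iff, Set.mem_Ioc, not_and_or, not_lt, not_le] at ht
        tauto
      by_cases htI : t ∈ Set.Icc (-2 : ℝ) 2
      · rw [hh, Set.indicator_of_mem htI]
        have hat : (1 : ℝ)/2 ≤ |a - t| := by
          have h7 := abs_le.mp ha
          rw [le_abs]
          rcases htS with h | h
          · left; linarith
          · right; linarith
        have hk2 : |k t| ≤ 2 := by
          rw [hk]; simp only
          rw [abs_div, abs_of_pos (hDpos t), div_le_iff₀ (hDpos t)]
          nlinarith [_root_.sq_abs (a - t), sq_nonneg b, abs_nonneg (a - t)]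
        calc g t ≤ |g t| := le_abs_self _
        _ = |φ t| * |k t| := by rw [hg]; simp only; rw [abs_mul]
        _ ≤ 1 * 2 := mul_le_mul (phi_abs_le hφ t) hk2 (abs_nonneg _) zero_le_one
        _ = 2 := by norm_num
      · have h2t : 2 ≤ |t| := by
          simp only [Set.mem_Icc, not_and_or, not_le] at htI
          rw [le_abs]
          rcases htI with h | h
          · right; linarith
          · left; linarith
        rw [hg]; simp only [phi_supp hφ t h2t, zero_mul]
        rw [hh, Set.indicator_of_notMem htI]
    have hstep1 : ∫ t in (Set.Ioc (-1 : ℝ) 1)ᶜ, g t ≤ ∫ t in (Set.Ioc (-1 : ℝ) 1)ᶜ, h t :=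
      setIntegral_mono_on hg_int.integrableOn hh_int.integrableOn
        measurableSet_Ioc.compl hgle
    have hstep2 : ∫ t in (Set.Ioc (-1 : ℝ) 1)ᶜ, h t ≤ ∫ t : ℝ, h t :=
      setIntegral_le_integral hh_int
        (ae_of_all _ fun t => Set.indicator_nonneg (fun _ _ => by norm_num) t)
    have hstep3 : ∫ t : ℝ, h t = 8 := by
      rw [hh, integral_indicator_const (2 : ℝ) measurableSet_Icc]
      simp [Real.volume_Icc]
      norm_num
    linarith
  -- bounds on F values
  have hlog2 : Real.log 2 ≤ 1 := by
    have := Real.log_le_sub_one_of_pos (by norm_num : (0:ℝ) < 2); linarith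
  have hFpm : ∀ s : ℝ, (1:ℝ)/4 ≤ (a - s)^2 + b^2 → F s ≤ 1 := by
    intro s hs
    rw [hF]; simp only
    have hl : Real.log (1/4 : ℝ) ≤ Real.log ((a - s)^2 + b^2) :=
      (Real.log_le_log_iff (by norm_num) (hDpos s)).mpr hs
    have hl4 : Real.log (1/4 : ℝ) = -(2 * Real.log 2) := by
      rw [one_div, Real.log_inv, show (4:ℝ) = 2^2 by norm_num, Real.log_pow]
      push_cast; ring
    nlinarith
  have habs := abs_le.mp ha
  have hF1 : F 1 ≤ 1 := hFpm 1 (by nlinarith [sq_nonneg b])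
  have hFm1 : F (-1) ≤ 1 := hFpm (-1) (by nlinarith [sq_nonneg b])
  have hF0 : -2 * F 0 = Real.log (a^2 + b^2) := by
    rw [hF]; simp only [sub_zero]; ring
  have hlogab : Real.log (a^2 + b^2) ≤ Real.log M + Real.log b := by
    rw [← Real.log_mul (by linarith : M ≠ 0) (ne_of_gt hb)]
    exact (Real.log_le_log_iff (by positivity) (by positivity)).mpr hab
  -- assemble the bound on A := ∫ g
  have hA : ∫ t : ℝ, g t ≤ Real.log b + (Real.log M + 10) := by
    rw [hsplit, hI1, hI2]
    have hF0' : F 1 + F (-1) - 2 * F 0 ≤ 1 + 1 + (Real.log M + Real.log b) := by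
      nlinarith
    linarith
  -- conclude
  have hAre : -(∫ t : ℝ, g t) ≤ ‖∫ t : ℝ, (φ t : ℂ) / (z - (t : ℂ))‖ := by
    have h8 : |(∫ t : ℝ, (φ t : ℂ) / (z - (t : ℂ))).re| ≤
        ‖∫ t : ℝ, (φ t : ℂ) / (z - (t : ℂ))‖ := by
      exact Complex.abs_re_le_norm _
    rw [hre] at h8
    calc -(∫ t : ℝ, g t) ≤ |∫ t : ℝ, g t| := neg_le_abs _
    _ ≤ _ := h8
  have hfin : Real.log (1/b) - (Real.log M + 10) ≤ -(∫ t : ℝ, g t) := by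
    rw [one_div, Real.log_inv]
    linarith
  linarith

end Stmt12Aux

/-- **First case of the construction.** If `|x n| ≤ c√(y n)` with `y n → 0`, then
`liminf |G_φ(x n + i y n)| / log(1/y n) ≥ 1/π`. -/
theorem stmt_12 (φ : ℝ → ℝ) (hφ : IsPhi φ) (c : ℝ) (hc : 0 < c) (x y : ℕ → ℝ)
    (hy : ∀ n, 0 < y n) (hy0 : Tendsto y atTop (𝓝 0))
    (hx : ∀ n, |x n| ≤ c * Real.sqrt (y n)) :
    ∀ ε > (0:ℝ), ∀ᶠ n in atTop,
      1 / Real.pi - ε ≤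
        ‖UHG φ ((x n : ℂ) + (y n : ℂ) * Complex.I)‖ / Real.log (1 / y n) := by
  intro ε hε
  have hπ := Real.pi_pos
  set M : ℝ := c^2 + 1 with hMdef
  have hM1 : 1 ≤ M := by nlinarith
  set C : ℝ := Real.log M + 10 with hCdef
  have hC0 : 0 < C := by
    have : 0 ≤ Real.log M := Real.log_nonneg hM1
    linarith
  set D : ℝ := C / (Real.pi * ε) + 1 with hDdef
  have hD1 : 1 ≤ D := by
    have h := div_nonneg hC0.le (mul_pos hπ hε).le
    rw [hDdef]
    linarith
  set y₀ : ℝ := min (min 1 ((2*c)⁻¹^2)) (Real.exp (-D)) with hy₀def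
  have hy₀pos : 0 < y₀ := by
    apply lt_min (lt_min one_pos (by positivity)) (Real.exp_pos _)
  have hev : ∀ᶠ n in atTop, y n < y₀ := hy0.eventually_lt_const hy₀pos
  filter_upwards [hev] with n hn
  have hyn := hy n
  have hy1 : y n ≤ 1 := (hn.trans_le ((min_le_left _ _).trans (min_le_left _ _))).le
  have hyc : y n ≤ (2*c)⁻¹^2 := (hn.trans_le ((min_le_left _ _).trans (min_le_right _ _))).le
  have hyexp : y n < Real.exp (-D) := hn.trans_le (min_le_right _ _)
  -- |x n| ≤ 1/2
  have hxhalf : |x n| ≤ 1/2 := by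
    have h1 : Real.sqrt (y n) ≤ (2*c)⁻¹ := by
      have := Real.sqrt_le_sqrt hyc
      rwa [Real.sqrt_sq (by positivity)] at this
    have h2 : c * Real.sqrt (y n) ≤ c * (2*c)⁻¹ :=
      mul_le_mul_of_nonneg_left h1 hc.le
    have h3 : c * (2*c)⁻¹ = 1/2 := by field_simp
    calc |x n| ≤ c * Real.sqrt (y n) := hx n
    _ ≤ 1/2 := by rw [← h3]; exact h2
  -- x n ^2 + y n ^2 ≤ M * y n
  have hab : (x n)^2 + (y n)^2 ≤ M * y n := by
    have h1 : |x n|^2 ≤ (c * Real.sqrt (y n))^2 :=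
      pow_le_pow_left₀ (abs_nonneg _) (hx n) 2
    rw [_root_.sq_abs, mul_pow, Real.sq_sqrt hyn.le] at h1
    nlinarith
  -- apply key lemma
  have hkey := Stmt12Aux.key φ hφ (x n) (y n) M hyn hy1 hM1 hxhalf hab
  -- L := log(1/y n) > D
  have hL : D < Real.log (1 / y n) := by
    have h1 : Real.log (y n) < Real.log (Real.exp (-D)) := Real.log_lt_log hyn hyexp
    rw [Real.log_exp] at h1
    rw [one_div, Real.log_inv]
    linarith
  have hLpos : 0 < Real.log (1 / y n) := lt_of_lt_of_le (by linarith) hL.le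
  -- norm of UHG
  have hnorm : ‖UHG φ ((x n : ℂ) + (y n : ℂ) * Complex.I)‖ =
      Real.pi⁻¹ * ‖∫ t : ℝ, ((φ t : ℂ) / ((x n : ℂ) + (y n : ℂ) * Complex.I - (t : ℂ)))‖ := by
    rw [UHG, norm_smul, norm_inv, norm_mul, Complex.norm_real, Complex.norm_I,
      Real.norm_eq_abs, abs_of_pos hπ, mul_one]
  rw [hnorm]
  rw [le_div_iff₀ hLpos]
  set L : ℝ := Real.log (1 / y n)
  set N : ℝ := ‖∫ t : ℝ, ((φ t : ℂ) / ((x n : ℂ) + (y n : ℂ) * Complex.I - (t : ℂ)))‖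
  have h4 : L - C ≤ N := hkey
  have h3 : C < ε * Real.pi * L := by
    have h5 : C / (Real.pi * ε) < L := by rw [hDdef] at hL; linarith
    have := (div_lt_iff₀ (by positivity : 0 < Real.pi * ε)).mp h5
    nlinarith
  have hππ : Real.pi⁻¹ * Real.pi = 1 := inv_mul_cancel₀ (ne_of_gt hπ)
  have hπinv : 0 < Real.pi⁻¹ := inv_pos.mpr hπ
  have h6 : Real.pi⁻¹ * (L - C) ≤ Real.pi⁻¹ * N := mul_le_mul_of_nonneg_left h4 hπinv.le
  have h7 : Real.pi⁻¹ * C ≤ ε * L := by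
    have := mul_le_mul_of_nonneg_left h3.le hπinv.le
    nlinarith
  have : (1 / Real.pi - ε) * L ≤ Real.pi⁻¹ * (L - C) := by
    rw [one_div]
    nlinarith
  linarith
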